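/- Let (w_i)_{i=1}^∞ be a non-increasing sequence of non-negative reals and define S(w) = sup over nonzero non-increasing sequences f = (a_i) of non-negative reals of (∑_{i=1}^∞ a_i w_i) / (sup_n ∑_{i=1}^n a_i w_{1+n-i}). Then S(w) < ∞ if and only if w ∈ ℓ_1 or inf_i w_i > 0. -/

import Mathlib

open scoped NNReal ENNReal
open Filter Finset

namespace Stmt18


/-- Sum of `w` over `[a, b)`. -/
noncomputable def Wsum (w : ℕ → ℝ≥0) (a b : ℕ) : ℝ≥0 := ∑ i ∈ Finset.Ico a b, w i

lemma Wsum_mono_right (w : ℕ → ℝ≥0) {a b c : ℕ} (h : b ≤ c) : Wsum w a b ≤ Wsum w a c :=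
  Finset.sum_le_sum_of_subset (Finset.Ico_subset_Ico le_rfl h)

lemma Wsum_zero_eq (w : ℕ → ℝ≥0) (b : ℕ) : Wsum w 0 b = ∑ i ∈ Finset.range b, w i := by
  rw [Wsum, Finset.range_eq_Ico]

lemma Wsum_consec (w : ℕ → ℝ≥0) {a b c : ℕ} (hab : a ≤ b) (hbc : b ≤ c) :
    Wsum w a b + Wsum w b c = Wsum w a c :=
  Finset.sum_Ico_consecutive _ hab hbc

lemma Wsum_le_of_zero_le (w : ℕ → ℝ≥0) {a b : ℕ} : Wsum w a b ≤ Wsum w 0 b :=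
  Finset.sum_le_sum_of_subset (Finset.Ico_subset_Ico (Nat.zero_le _) le_rfl)

lemma Wsum_shift (w : ℕ → ℝ≥0) (hw : Antitone w) (s L : ℕ) :
    Wsum w s (s + L) ≤ Wsum w 0 L := by
  rw [Wsum, Wsum, Finset.sum_Ico_eq_sum_range, Finset.sum_Ico_eq_sum_range]
  simp only [Nat.add_sub_cancel_left, Nat.sub_zero, Nat.zero_add]
  exact Finset.sum_le_sum fun i _ => hw (Nat.le_add_left i s)

lemma Wsum_le_card_mul (w : ℕ → ℝ≥0) (hw : Antitone w) (s L : ℕ) :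
    Wsum w s (s + L) ≤ (L : ℝ≥0) * w s := by
  have := Finset.sum_le_card_nsmul (Finset.Ico s (s + L)) w (w s)
    (fun x hx => hw (Finset.mem_Ico.mp hx).1)
  rwa [Nat.card_Ico, Nat.add_sub_cancel_left, nsmul_eq_mul] at this

lemma card_mul_le_Wsum (w : ℕ → ℝ≥0) (hw : Antitone w) (a b : ℕ) :
    ((b - a : ℕ) : ℝ≥0) * w b ≤ Wsum w a b := by
  have := Finset.card_nsmul_le_sum (Finset.Ico a b) w (w b)
    (fun x hx => hw (le_of_lt (Finset.mem_Ico.mp hx).2))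
  rwa [Nat.card_Ico, nsmul_eq_mul] at this

/-- reflection: `∑_{i∈[a,b)} w (n-1-i) = ∑_{m∈[n-b, n-a)} w m`, for `b ≤ n`. -/
lemma sum_reflect (w : ℕ → ℝ≥0) {a b n : ℕ} (hbn : b ≤ n) :
    ∑ i ∈ Finset.Ico a b, w (n - 1 - i) = Wsum w (n - b) (n - a) := by
  rcases Nat.eq_zero_or_pos n with hn | hn
  · subst hn
    have hb : b = 0 := Nat.le_zero.mp hbn
    subst hb
    simp [Wsum]
  · have h1 : n - 1 + 1 = n := Nat.succ_pred_eq_of_pos hn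
    have := Finset.sum_Ico_reflect w a (m := b) (n := n - 1) (by omega)
    rw [Wsum]
    rw [h1] at this
    exact this



def StepProp (w : ℕ → ℝ≥0) (K : ℕ) (s nt : ℕ × ℝ≥0) : Prop :=
  0 < nt.2 ∧ nt.2 ≤ s.2 ∧ nt.2 * w 0 ≤ 1 ∧ s.1 < nt.1 ∧
  nt.2 * Wsum w 0 s.1 ≤ 1 ∧ 1 ≤ nt.2 * Wsum w s.1 nt.1 ∧ nt.2 * Wsum w s.1 nt.1 ≤ 2 ∧
  (K : ℝ≥0) * w (nt.1 - s.1) ≤ w s.1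

lemma step_ex (w : ℕ → ℝ≥0) (hw : Antitone w) (hpos : ∀ m, 0 < w m)
    (hto : Tendsto w atTop (nhds 0)) (htop : ∀ (C : ℝ≥0) (p : ℕ), ∃ n, C ≤ Wsum w p n)
    (K : ℕ) (s : ℕ × ℝ≥0) (hs : 0 < s.2) : ∃ nt, StepProp w K s nt := by
  classical
  obtain ⟨p, t0⟩ := s
  simp only at hs ⊢
  -- choose D with (K:ℝ≥0) * w D ≤ w p
  have hεpos : 0 < w p / ((K : ℝ≥0) + 1) := by
    apply div_pos (hpos p); positivity
  obtain ⟨D, hD⟩ := (hto.eventually_lt_const hεpos).exists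
  have hKD : (K : ℝ≥0) * w D ≤ w p := by
    have h1 : ((K : ℝ≥0) + 1) * w D ≤ ((K : ℝ≥0) + 1) * (w p / ((K : ℝ≥0) + 1)) :=
      mul_le_mul_right hD.le _
    rw [mul_div_cancel₀] at h1
    · exact le_trans (mul_le_mul_left (le_add_of_nonneg_right zero_le_one) (w D)) h1
    · positivity
  -- choose t'
  set Q : ℝ≥0 := Wsum w 0 (p + D) with hQ
  set t : ℝ≥0 := min t0 (min (w 0)⁻¹ (2 * (1 + Q))⁻¹) with ht
  have htpos : 0 < t := by
    apply lt_min hs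
    apply lt_min
    · exact inv_pos.mpr (hpos 0)
    · apply inv_pos.mpr; positivity
  have htw0 : t * w 0 ≤ 1 := by
    calc t * w 0 ≤ (w 0)⁻¹ * w 0 :=
          mul_le_mul_left (le_trans (min_le_right _ _) (min_le_left _ _)) _
    _ ≤ 1 := by
        rw [inv_mul_cancel₀ (hpos 0).ne']
  have htQ : t * Q ≤ 2⁻¹ := by
    calc t * Q ≤ (2 * (1 + Q))⁻¹ * (1 + Q) := by
          apply mul_le_mul' (le_trans (min_le_right _ _) (min_le_right _ _))
          exact le_add_of_nonneg_left zero_le_one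
    _ = 2⁻¹ := by
        rw [mul_inv]
        rw [mul_assoc, inv_mul_cancel₀ (by positivity : (1 + Q : ℝ≥0) ≠ 0), mul_one]
  -- existence of endpoint
  have hex : ∃ n, 1 ≤ t * Wsum w p n := by
    obtain ⟨n, hn⟩ := htop t⁻¹ p
    exact ⟨n, by
      calc (1 : ℝ≥0) = t * t⁻¹ := by rw [mul_inv_cancel₀ htpos.ne']
      _ ≤ t * Wsum w p n := mul_le_mul_right hn _⟩
  set n' := Nat.find hex with hn'
  have hfind : 1 ≤ t * Wsum w p n' := Nat.find_spec hex
  have hWQ : ∀ m, m ≤ p + D → t * Wsum w p m ≤ 2⁻¹ := by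
    intro m hm
    calc t * Wsum w p m ≤ t * Q := by
          apply mul_le_mul_right
          calc Wsum w p m ≤ Wsum w p (p + D) :=
                Finset.sum_le_sum_of_subset (Finset.Ico_subset_Ico le_rfl hm)
          _ ≤ Wsum w 0 (p + D) :=
                Finset.sum_le_sum_of_subset (Finset.Ico_subset_Ico (Nat.zero_le _) le_rfl)
    _ ≤ 2⁻¹ := htQ
  have hpD : p + D < n' := by
    by_contra hc
    push_neg at hc
    have := hWQ n' hc
    have h2 : (1 : ℝ≥0) ≤ 2⁻¹ := le_trans hfind this
    rw [← NNReal.coe_le_coe] at h2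
    norm_num at h2
  have hupper : t * Wsum w p n' ≤ 2 := by
    have hn1 : 1 ≤ n' := by omega
    have hmin : ¬ (1 ≤ t * Wsum w p (n' - 1)) := Nat.find_min hex (by omega)
    push_neg at hmin
    have hsum : Wsum w p n' = Wsum w p (n' - 1) + w (n' - 1) := by
      rw [Wsum, Wsum]
      rw [show Finset.Ico p n' = Finset.Ico p ((n' - 1) + 1) by congr 1; omega,
        Finset.sum_Ico_succ_top (by omega)]
    rw [hsum, mul_add]
    calc t * Wsum w p (n' - 1) + t * w (n' - 1)
        ≤ 1 + t * w 0 := add_le_add hmin.le (mul_le_mul_right (hw (Nat.zero_le _)) t)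
    _ ≤ 1 + 1 := add_le_add_right htw0 _
    _ = 2 := by norm_num
  refine ⟨(n', t), htpos, min_le_left _ _, htw0, by omega, ?_, hfind, hupper, ?_⟩
  · have h1 : t * Wsum w 0 p ≤ t * Q := by
      apply mul_le_mul_right
      exact Finset.sum_le_sum_of_subset (Finset.Ico_subset_Ico le_rfl (Nat.le_add_right _ _))
    calc t * Wsum w 0 p ≤ 2⁻¹ := le_trans h1 htQ
      _ ≤ 1 := by norm_num
  · show (K : ℝ≥0) * w (n' - p) ≤ w p
    calc (K : ℝ≥0) * w (n' - p) ≤ (K : ℝ≥0) * w D := mul_le_mul_right (hw (by omega)) _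
      _ ≤ w p := hKD


open Classical in
noncomputable def stepFn (w : ℕ → ℝ≥0) (K : ℕ) (s : ℕ × ℝ≥0) : ℕ × ℝ≥0 :=
  if h : ∃ nt, StepProp w K s nt then h.choose else s

noncomputable def seq (w : ℕ → ℝ≥0) (K : ℕ) : ℕ → ℕ × ℝ≥0
  | 0 => (0, 1)
  | k + 1 => stepFn w K (seq w K k)

noncomputable def NN (w : ℕ → ℝ≥0) (K : ℕ) (k : ℕ) : ℕ := (seq w K k).1
noncomputable def TT (w : ℕ → ℝ≥0) (K : ℕ) (k : ℕ) : ℝ≥0 := (seq w K k).2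

section Invariants

variable {w : ℕ → ℝ≥0} {K : ℕ} (hw : Antitone w) (hpos : ∀ m, 0 < w m)
  (hto : Tendsto w atTop (nhds 0)) (htop : ∀ (C : ℝ≥0) (p : ℕ), ∃ n, C ≤ Wsum w p n)

include hw hpos hto htop

lemma seq_spec : ∀ k, StepProp w K (seq w K k) (seq w K (k + 1)) := by
  have key : ∀ s : ℕ × ℝ≥0, 0 < s.2 → StepProp w K s (stepFn w K s) := by
    intro s hs
    have h := step_ex w hw hpos hto htop K s hs
    rw [stepFn, dif_pos h]
    exact h.choose_spec
  have pos : ∀ k, 0 < (seq w K k).2 := by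
    intro k
    induction k with
    | zero => norm_num [seq]
    | succ k ih => exact (key _ ih).1
  intro k
  exact key _ (pos k)

omit hw hpos hto htop in
lemma NN_zero : NN w K 0 = 0 := rfl

lemma NN_lt_succ (k : ℕ) : NN w K k < NN w K (k + 1) :=
  (seq_spec hw hpos hto htop k).2.2.2.1

lemma NN_strictMono : StrictMono (NN w K) :=
  strictMono_nat_of_lt_succ (NN_lt_succ hw hpos hto htop)

lemma TT_pos (k : ℕ) : 0 < TT w K k := by
  induction k with
  | zero => norm_num [TT, seq]
  | succ k ih => exact (seq_spec hw hpos hto htop k).1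

lemma TT_antitone : Antitone (TT w K) :=
  antitone_nat_of_succ_le fun k => (seq_spec hw hpos hto htop k).2.1

lemma TT_P_le (k : ℕ) : TT w K (k + 1) * Wsum w 0 (NN w K k) ≤ 1 :=
  (seq_spec hw hpos hto htop k).2.2.2.2.1

lemma one_le_TS (k : ℕ) : 1 ≤ TT w K (k + 1) * Wsum w (NN w K k) (NN w K (k + 1)) :=
  (seq_spec hw hpos hto htop k).2.2.2.2.2.1

lemma TS_le_two (k : ℕ) : TT w K (k + 1) * Wsum w (NN w K k) (NN w K (k + 1)) ≤ 2 :=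
  (seq_spec hw hpos hto htop k).2.2.2.2.2.2.1

lemma K_w_le (k : ℕ) : (K : ℝ≥0) * w (NN w K (k + 1) - NN w K k) ≤ w (NN w K k) :=
  (seq_spec hw hpos hto htop k).2.2.2.2.2.2.2

lemma TT_P_le' (k : ℕ) : TT w K (k + 1) * Wsum w 0 (NN w K (k + 1)) ≤ 3 := by
  have h := Wsum_consec w (Nat.zero_le (NN w K k)) (NN_lt_succ hw hpos hto htop k).le
  calc TT w K (k + 1) * Wsum w 0 (NN w K (k + 1))
      = TT w K (k + 1) * Wsum w 0 (NN w K k)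
        + TT w K (k + 1) * Wsum w (NN w K k) (NN w K (k + 1)) := by rw [← h, mul_add]
    _ ≤ 1 + 2 := add_le_add (TT_P_le hw hpos hto htop k) (TS_le_two hw hpos hto htop k)
    _ = 3 := by norm_num

end Invariants


section AA

variable {w : ℕ → ℝ≥0} {K : ℕ} (hw : Antitone w) (hpos : ∀ m, 0 < w m)
  (hto : Tendsto w atTop (nhds 0)) (htop : ∀ (C : ℝ≥0) (p : ℕ), ∃ n, C ≤ Wsum w p n)

noncomputable def aa (w : ℕ → ℝ≥0) (K : ℕ) (i : ℕ) : ℝ≥0 :=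
  if h : i < NN w K K then TT w K (Nat.find (⟨K, h⟩ : ∃ k, i < NN w K k)) else 0

include hw hpos hto htop

lemma NN_mono : Monotone (NN w K) := (NN_strictMono hw hpos hto htop).monotone

lemma aa_block {k i : ℕ} (hk : k + 1 ≤ K) (h1 : NN w K k ≤ i) (h2 : i < NN w K (k + 1)) :
    aa w K i = TT w K (k + 1) := by
  have hiK : i < NN w K K := lt_of_lt_of_le h2 (NN_mono hw hpos hto htop hk)
  rw [aa, dif_pos hiK]
  congr 1
  rw [Nat.find_eq_iff]
  refine ⟨h2, ?_⟩
  intro m hm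
  push_neg
  exact le_trans (NN_mono hw hpos hto htop (by omega : m ≤ k)) h1

lemma aa_zero {i : ℕ} (h : NN w K K ≤ i) : aa w K i = 0 := by
  rw [aa, dif_neg (by omega)]

lemma aa_antitone : Antitone (aa w K) := by
  intro i j hij
  by_cases hj : j < NN w K K
  · have hi : i < NN w K K := lt_of_le_of_lt hij hj
    simp only [aa]
    rw [dif_pos hi, dif_pos hj]
    apply TT_antitone hw hpos hto htop
    apply Nat.find_min'
    exact lt_of_le_of_lt hij (Nat.find_spec (⟨K, hj⟩ : ∃ k, j < NN w K k))
  · rw [aa, dif_neg hj]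
    exact zero_le

lemma sum_split (g : ℕ → ℝ≥0) :
    ∀ (k n : ℕ), NN w K k ≤ n →
      ∑ i ∈ Finset.range n, g i
        = (∑ j ∈ Finset.range k, ∑ i ∈ Finset.Ico (NN w K j) (NN w K (j + 1)), g i)
          + ∑ i ∈ Finset.Ico (NN w K k) n, g i := by
  intro k
  induction k with
  | zero =>
    intro n _
    rw [NN_zero, Finset.range_eq_Ico]
    simp
  | succ k ih =>
    intro n hn
    have h1 : NN w K k ≤ NN w K (k + 1) := (NN_lt_succ hw hpos hto htop k).le
    rw [ih n (le_trans h1 hn), ← Finset.sum_Ico_consecutive g h1 hn,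
      Finset.sum_range_succ, add_assoc]


lemma aa_ne_zero (hK : 0 < K) : aa w K ≠ 0 := by
  have h1 : NN w K 0 = 0 := rfl
  have ha0 : aa w K 0 = TT w K 1 := by
    apply aa_block hw hpos hto htop (by omega)
    · omega
    · have := NN_lt_succ hw hpos hto htop (K := K) 0
      omega
  intro h
  have h0 : aa w K 0 = 0 := congrFun h 0
  rw [ha0] at h0
  exact (TT_pos hw hpos hto htop 1).ne' h0

lemma A_lower (hK : 0 < K) :
    (K : ℝ≥0) ≤ ∑ i ∈ Finset.range (NN w K K), aa w K i * w i := by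
  have hsplit := sum_split hw hpos hto htop (fun i => aa w K i * w i) K (NN w K K) le_rfl
  rw [hsplit, Finset.Ico_self, Finset.sum_empty, add_zero]
  calc (K : ℝ≥0) = ∑ _j ∈ Finset.range K, (1 : ℝ≥0) := by simp
    _ ≤ _ := ?_
  apply Finset.sum_le_sum
  intro j hj
  have hj' : j + 1 ≤ K := Finset.mem_range.mp hj
  have heq : ∑ i ∈ Finset.Ico (NN w K j) (NN w K (j + 1)), aa w K i * w i
      = TT w K (j + 1) * Wsum w (NN w K j) (NN w K (j + 1)) := by
    rw [Wsum, Finset.mul_sum]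
    apply Finset.sum_congr rfl
    intro i hi
    obtain ⟨hi1, hi2⟩ := Finset.mem_Ico.mp hi
    rw [aa_block hw hpos hto htop hj' hi1 hi2]
  rw [heq]
  exact one_le_TS hw hpos hto htop j

lemma B_upper_core (hK : 0 < K) {n : ℕ} (hn1 : 1 ≤ n) (hnK : n ≤ NN w K K) :
    ∑ i ∈ Finset.range n, aa w K i * w (n - 1 - i) ≤ 8 := by
  classical
  have hNlt : ∀ k, NN w K k < NN w K (k + 1) := NN_lt_succ hw hpos hto htop
  have hNmono : Monotone (NN w K) := NN_mono hw hpos hto htop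
  have hex : ∃ k, n ≤ NN w K k := ⟨K, hnK⟩
  obtain ⟨k, hkn, hmin⟩ : ∃ k, (n ≤ NN w K k) ∧ ∀ m, m < k → ¬ n ≤ NN w K m :=
    ⟨Nat.find hex, Nat.find_spec hex, fun m hm => Nat.find_min hex hm⟩
  have hkK : k ≤ K := not_lt.mp (fun h => hmin K h hnK)
  have hk1 : 1 ≤ k := by
    rcases Nat.eq_zero_or_pos k with h | h
    · exfalso
      rw [h] at hkn
      have h0 : NN w K 0 = 0 := rfl
      omega
    · exact h
  obtain ⟨k', rfl⟩ : ∃ k'', k = k'' + 1 := ⟨k - 1, by omega⟩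
  have hNn : NN w K k' < n := by
    have := hmin k' (by omega)
    omega
  rw [sum_split hw hpos hto htop (fun i => aa w K i * w (n - 1 - i)) k' n hNn.le]
  -- block equalities
  have hBeq : ∀ j, j < k' + 1 → NN w K (j + 1) ≤ n →
      ∑ i ∈ Finset.Ico (NN w K j) (NN w K (j + 1)), aa w K i * w (n - 1 - i)
        = TT w K (j + 1) * Wsum w (n - NN w K (j + 1)) (n - NN w K j) := by
    intro j hj hjn
    have heq : ∑ i ∈ Finset.Ico (NN w K j) (NN w K (j + 1)), aa w K i * w (n - 1 - i)
        = TT w K (j + 1) * ∑ i ∈ Finset.Ico (NN w K j) (NN w K (j + 1)), w (n - 1 - i) := by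
      rw [Finset.mul_sum]
      apply Finset.sum_congr rfl
      intro i hi
      obtain ⟨hi1, hi2⟩ := Finset.mem_Ico.mp hi
      rw [aa_block hw hpos hto htop (by omega) hi1 hi2]
    rw [heq, sum_reflect w hjn]
  -- last (partial) block
  have hlast : ∑ i ∈ Finset.Ico (NN w K k') n, aa w K i * w (n - 1 - i) ≤ 3 := by
    have heq : ∑ i ∈ Finset.Ico (NN w K k') n, aa w K i * w (n - 1 - i)
        = TT w K (k' + 1) * ∑ i ∈ Finset.Ico (NN w K k') n, w (n - 1 - i) := by
      rw [Finset.mul_sum]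
      apply Finset.sum_congr rfl
      intro i hi
      obtain ⟨hi1, hi2⟩ := Finset.mem_Ico.mp hi
      rw [aa_block hw hpos hto htop (by omega) hi1 (by omega)]
    rw [heq, sum_reflect w le_rfl, Nat.sub_self]
    calc TT w K (k' + 1) * Wsum w 0 (n - NN w K k')
        ≤ TT w K (k' + 1) * Wsum w 0 (NN w K (k' + 1)) :=
          mul_le_mul_right (Wsum_mono_right w (by omega)) _
      _ ≤ 3 := TT_P_le' hw hpos hto htop k'
  -- full blocks: uniform bound 3
  have hfull : ∀ j, j < k' →
      TT w K (j + 1) * Wsum w (n - NN w K (j + 1)) (n - NN w K j) ≤ 3 := by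
    intro j hj
    have hj1n : NN w K (j + 1) ≤ n := le_trans (hNmono (by omega)) hNn.le
    have hjj : NN w K j ≤ NN w K (j + 1) := (hNlt j).le
    have hL : n - NN w K j = (n - NN w K (j + 1)) + (NN w K (j + 1) - NN w K j) := by
      omega
    calc TT w K (j + 1) * Wsum w (n - NN w K (j + 1)) (n - NN w K j)
        ≤ TT w K (j + 1) * Wsum w 0 (NN w K (j + 1) - NN w K j) := by
          apply mul_le_mul_right
          rw [hL]
          exact Wsum_shift w hw _ _
      _ ≤ TT w K (j + 1) * Wsum w 0 (NN w K (j + 1)) :=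
          mul_le_mul_right (Wsum_mono_right w (by omega)) _
      _ ≤ 3 := TT_P_le' hw hpos hto htop j
  -- old blocks: K * Bj ≤ 2
  have hold : ∀ j, j + 1 < k' →
      (K : ℝ≥0) * (TT w K (j + 1) * Wsum w (n - NN w K (j + 1)) (n - NN w K j)) ≤ 2 := by
    intro j hj
    have hk'1 : k' - 1 + 1 = k' := by omega
    have hj1 : j + 1 ≤ k' - 1 := by omega
    have hj1n : NN w K (j + 1) ≤ NN w K (k' - 1) := hNmono hj1
    have hs : NN w K k' - NN w K (k' - 1) ≤ n - NN w K (j + 1) := by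
      have h1 : NN w K (k' - 1) < NN w K k' := by
        conv_rhs => rw [← hk'1]
        exact hNlt _
      omega

    have hL : n - NN w K j = (n - NN w K (j + 1)) + (NN w K (j + 1) - NN w K j) := by
      have h4 : NN w K j ≤ NN w K (j + 1) := (hNlt j).le
      have h3 : NN w K (j + 1) ≤ n := le_trans hj1n (le_trans (hNmono (by omega : k' - 1 ≤ k')) hNn.le)
      omega
    have hKw : (K : ℝ≥0) * w (n - NN w K (j + 1)) ≤ w (NN w K (j + 1)) := by
      calc (K : ℝ≥0) * w (n - NN w K (j + 1))
          ≤ (K : ℝ≥0) * w (NN w K k' - NN w K (k' - 1)) := mul_le_mul_right (hw hs) _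
        _ ≤ w (NN w K (k' - 1)) := by
            have := K_w_le hw hpos hto htop (K := K) (k' - 1)
            rwa [hk'1] at this
        _ ≤ w (NN w K (j + 1)) := hw hj1n
    calc (K : ℝ≥0) * (TT w K (j + 1) * Wsum w (n - NN w K (j + 1)) (n - NN w K j))
        ≤ (K : ℝ≥0) * (TT w K (j + 1) *
            (((NN w K (j + 1) - NN w K j : ℕ) : ℝ≥0) * w (n - NN w K (j + 1)))) := by
          apply mul_le_mul_right
          apply mul_le_mul_right
          rw [hL]
          exact Wsum_le_card_mul w hw _ _
      _ = TT w K (j + 1) * (((NN w K (j + 1) - NN w K j : ℕ) : ℝ≥0) *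
            ((K : ℝ≥0) * w (n - NN w K (j + 1)))) := by ring
      _ ≤ TT w K (j + 1) * (((NN w K (j + 1) - NN w K j : ℕ) : ℝ≥0) * w (NN w K (j + 1))) :=
          mul_le_mul_right (mul_le_mul_right hKw _) _
      _ ≤ TT w K (j + 1) * Wsum w (NN w K j) (NN w K (j + 1)) :=
          mul_le_mul_right (card_mul_le_Wsum w hw _ _) _
      _ ≤ 2 := TS_le_two hw hpos hto htop j
  -- combine
  have hmain : ∑ j ∈ Finset.range k',
      (∑ i ∈ Finset.Ico (NN w K j) (NN w K (j + 1)), aa w K i * w (n - 1 - i)) ≤ 5 := by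
    rcases Nat.eq_zero_or_pos k' with hk0 | hk0
    · rw [hk0]
      simp
    · obtain ⟨k'', rfl⟩ : ∃ k'', k' = k'' + 1 := ⟨k' - 1, by omega⟩
      rw [Finset.sum_range_succ]
      have h1 : ∑ j ∈ Finset.range k'',
          (∑ i ∈ Finset.Ico (NN w K j) (NN w K (j + 1)), aa w K i * w (n - 1 - i)) ≤ 2 := by
        apply le_of_mul_le_mul_left _ (show 0 < (K : ℝ≥0) by exact_mod_cast hK)
        rw [Finset.mul_sum]
        calc ∑ j ∈ Finset.range k'', (K : ℝ≥0) *
              (∑ i ∈ Finset.Ico (NN w K j) (NN w K (j + 1)), aa w K i * w (n - 1 - i))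
            ≤ ∑ _j ∈ Finset.range k'', (2 : ℝ≥0) := by
              apply Finset.sum_le_sum
              intro j hj
              have hjk : j + 1 < k'' + 1 := by
                have := Finset.mem_range.mp hj
                omega
              rw [hBeq j (by omega) (le_trans (hNmono (by omega)) hNn.le)]
              exact hold j hjk
          _ = 2 * (k'' : ℝ≥0) := by
              rw [Finset.sum_const, Finset.card_range, nsmul_eq_mul, mul_comm]
          _ ≤ (K : ℝ≥0) * 2 := by
              rw [mul_comm]
              apply mul_le_mul_left
              exact_mod_cast (show k'' ≤ K by omega)
      have h2 : ∑ i ∈ Finset.Ico (NN w K k'') (NN w K (k'' + 1)), aa w K i * w (n - 1 - i) ≤ 3 := by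
        rw [hBeq k'' (by omega) (le_trans (hNmono (by omega)) hNn.le)]
        exact hfull k'' (by omega)
      calc _ ≤ (2 : ℝ≥0) + 3 := add_le_add h1 h2
        _ = 5 := by norm_num
  calc ∑ j ∈ Finset.range k',
        (∑ i ∈ Finset.Ico (NN w K j) (NN w K (j + 1)), aa w K i * w (n - 1 - i))
      + ∑ i ∈ Finset.Ico (NN w K k') n, aa w K i * w (n - 1 - i)
      ≤ 5 + 3 := add_le_add hmain hlast
    _ = 8 := by norm_num

lemma B_upper (hK : 0 < K) (n : ℕ) :
    ∑ i ∈ Finset.range n, aa w K i * w (n - 1 - i) ≤ 8 := by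
  rcases Nat.eq_zero_or_pos n with hn | hn
  · rw [hn]
    simp
  by_cases hnK : n ≤ NN w K K
  · exact B_upper_core hw hpos hto htop hK hn hnK
  push_neg at hnK
  set m := NN w K K with hm
  have hNmono : Monotone (NN w K) := NN_mono hw hpos hto htop
  have hm1 : 1 ≤ m := by
    have h0 : NN w K 0 = 0 := rfl
    have h1 : NN w K 1 ≤ NN w K K := hNmono (show 1 ≤ K by omega)
    have h2 : NN w K 0 < NN w K 1 := NN_lt_succ hw hpos hto htop 0
    omega
  have step1 : ∑ i ∈ Finset.range n, aa w K i * w (n - 1 - i)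
      = ∑ i ∈ Finset.range m, aa w K i * w (n - 1 - i) := by
    symm
    apply Finset.sum_subset (Finset.range_subset_range.mpr hnK.le)
    intro i hi hni
    have : m ≤ i := by
      simp only [Finset.mem_range, not_lt] at hni
      exact hni
    rw [aa_zero hw hpos hto htop this, zero_mul]
  have step2 : ∑ i ∈ Finset.range m, aa w K i * w (n - 1 - i)
      ≤ ∑ i ∈ Finset.range m, aa w K i * w (m - 1 - i) := by
    apply Finset.sum_le_sum
    intro i hi
    apply mul_le_mul_right
    apply hw
    have := Finset.mem_range.mp hi
    omega
  rw [step1]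
  exact le_trans step2 (B_upper_core hw hpos hto htop hK hm1 le_rfl)

lemma construction (hK : 0 < K) :
    ∃ a : ℕ → ℝ≥0, Antitone a ∧ a ≠ 0 ∧
      (∀ n : ℕ, ∑ i ∈ Finset.range n, a i * w (n - 1 - i) ≤ 8) ∧
      ∃ m : ℕ, (K : ℝ≥0) ≤ ∑ i ∈ Finset.range m, a i * w i :=
  ⟨aa w K, aa_antitone hw hpos hto htop, aa_ne_zero hw hpos hto htop hK,
    B_upper hw hpos hto htop hK, NN w K K, A_lower hw hpos hto htop hK⟩
end AA


section Glue

variable {w : ℕ → ℝ≥0}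

lemma pos_of_tsum_top (hw : Antitone w) (h : ∑' i : ℕ, (w i : ℝ≥0∞) = ⊤) :
    ∀ m, 0 < w m := by
  intro m
  by_contra h0
  push_neg at h0
  have hm : w m = 0 := le_antisymm h0 zero_le
  have hz : ∀ i ∉ Finset.range (m + 1), (w i : ℝ≥0∞) = 0 := by
    intro i hi
    simp only [Finset.mem_range, not_lt] at hi
    have : w i ≤ w m := hw (by omega)
    rw [hm] at this
    simp [le_antisymm this zero_le]
  rw [tsum_eq_sum hz, ← ENNReal.coe_finset_sum] at h
  exact ENNReal.coe_ne_top h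

lemma htop_of_tsum_top (h : ∑' i : ℕ, (w i : ℝ≥0∞) = ⊤) :
    ∀ (C : ℝ≥0) (p : ℕ), ∃ n, C ≤ Wsum w p n := by
  intro C p
  have htend := ENNReal.tendsto_nat_tsum (fun i => (w i : ℝ≥0∞))
  rw [h] at htend
  have hlt : ((C + ∑ i ∈ Finset.range p, w i : ℝ≥0) : ℝ≥0∞) < ⊤ := ENNReal.coe_lt_top
  obtain ⟨n, hn⟩ := (htend.eventually_const_lt hlt).exists
  refine ⟨max n p, ?_⟩
  have h1 : ((C + ∑ i ∈ Finset.range p, w i : ℝ≥0) : ℝ≥0∞)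
      < ∑ i ∈ Finset.range (max n p), (w i : ℝ≥0∞) :=
    lt_of_lt_of_le hn (Finset.sum_le_sum_of_subset
      (Finset.range_subset_range.mpr (le_max_left _ _)))
  rw [← ENNReal.coe_finset_sum, ENNReal.coe_lt_coe] at h1
  have hsplit : ∑ i ∈ Finset.range (max n p), w i
      = (∑ i ∈ Finset.range p, w i) + Wsum w p (max n p) := by
    simp only [Finset.range_eq_Ico, Wsum]
    exact (Finset.sum_Ico_consecutive _ (Nat.zero_le p) (le_max_right n p)).symm
  rw [hsplit, add_comm C] at h1
  exact (lt_of_add_lt_add_left h1).le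

end Glue

end Stmt18

open Stmt18

/-- For a non-increasing sequence `(w_i)` of non-negative reals with `w_1 > 0`, the
supremum `S(w)` over all nonzero non-increasing non-negative sequences `(a_i)` of
`(∑_i a_i w_i) / (sup_n ∑_{i=1}^n a_i w_{1+n-i})` is finite iff `w ∈ ℓ₁` or
`inf_i w_i > 0`. -/

theorem stmt_18 (w : ℕ → ℝ≥0) (hw : Antitone w) (hw1 : 0 < w 0) :
    (⨆ f : {a : ℕ → ℝ≥0 // Antitone a ∧ a ≠ 0},
        (∑' i : ℕ, ((f.1 i * w i : ℝ≥0) : ℝ≥0∞)) /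
          (⨆ n : ℕ, ∑ i ∈ Finset.range n, ((f.1 i * w (n - 1 - i) : ℝ≥0) : ℝ≥0∞)))
      ≠ ⊤
    ↔ (∑' i : ℕ, (w i : ℝ≥0∞) ≠ ⊤ ∨ 0 < ⨅ i, w i) := by
  constructor
  · intro hfin
    by_contra hcon
    push_neg at hcon
    obtain ⟨hsum, hinf⟩ := hcon
    have hinf0 : ⨅ i, w i = 0 := le_antisymm hinf zero_le
    have hpos : ∀ m, 0 < w m := pos_of_tsum_top hw hsum
    have hto : Filter.Tendsto w Filter.atTop (nhds 0) := by
      have := tendsto_atTop_ciInf hw (OrderBot.bddBelow _)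
      rwa [hinf0] at this
    have htop := htop_of_tsum_top hsum
    obtain ⟨M, hM⟩ := ENNReal.exists_nat_gt hfin
    obtain ⟨a, haA, haNe, hB, m, hA⟩ :=
      construction hw hpos hto htop (K := 8 * (M + 1)) (by omega)
    set f : {a : ℕ → ℝ≥0 // Antitone a ∧ a ≠ 0} := ⟨a, haA, haNe⟩ with hf
    have hle : (∑' i : ℕ, ((a i * w i : ℝ≥0) : ℝ≥0∞)) /
          (⨆ n : ℕ, ∑ i ∈ Finset.range n, ((a i * w (n - 1 - i) : ℝ≥0) : ℝ≥0∞))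
        ≤ ⨆ f : {a : ℕ → ℝ≥0 // Antitone a ∧ a ≠ 0},
          (∑' i : ℕ, ((f.1 i * w i : ℝ≥0) : ℝ≥0∞)) /
            (⨆ n : ℕ, ∑ i ∈ Finset.range n, ((f.1 i * w (n - 1 - i) : ℝ≥0) : ℝ≥0∞)) :=
      le_iSup (fun f : {a : ℕ → ℝ≥0 // Antitone a ∧ a ≠ 0} =>
        (∑' i : ℕ, ((f.1 i * w i : ℝ≥0) : ℝ≥0∞)) /
          (⨆ n : ℕ, ∑ i ∈ Finset.range n, ((f.1 i * w (n - 1 - i) : ℝ≥0) : ℝ≥0∞))) f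
    have hAbound : ((8 * (M + 1) : ℕ) : ℝ≥0∞) ≤ ∑' i : ℕ, ((a i * w i : ℝ≥0) : ℝ≥0∞) := by
      calc ((8 * (M + 1) : ℕ) : ℝ≥0∞) = (((8 * (M + 1) : ℕ) : ℝ≥0) : ℝ≥0∞) := by norm_cast
        _ ≤ ((∑ i ∈ Finset.range m, a i * w i : ℝ≥0) : ℝ≥0∞) := ENNReal.coe_le_coe.mpr hA
        _ = ∑ i ∈ Finset.range m, ((a i * w i : ℝ≥0) : ℝ≥0∞) := ENNReal.coe_finset_sum _ _
        _ ≤ _ := ENNReal.sum_le_tsum _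
    have hBbound : (⨆ n : ℕ, ∑ i ∈ Finset.range n, ((a i * w (n - 1 - i) : ℝ≥0) : ℝ≥0∞))
        ≤ 8 := by
      apply iSup_le
      intro n
      rw [← ENNReal.coe_finset_sum]
      exact_mod_cast hB n
    have hq : ((M : ℝ≥0∞) + 1) ≤ (∑' i : ℕ, ((a i * w i : ℝ≥0) : ℝ≥0∞)) /
        (⨆ n : ℕ, ∑ i ∈ Finset.range n, ((a i * w (n - 1 - i) : ℝ≥0) : ℝ≥0∞)) := by
      have hc : ((8 * (M + 1) : ℕ) : ℝ≥0∞) / 8 = (M : ℝ≥0∞) + 1 := by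
        push_cast
        rw [div_eq_mul_inv, mul_comm (8 : ℝ≥0∞), mul_assoc,
          ENNReal.mul_inv_cancel (by norm_num) (by norm_num), mul_one]
      calc ((M : ℝ≥0∞) + 1) = ((8 * (M + 1) : ℕ) : ℝ≥0∞) / 8 := hc.symm
        _ ≤ (∑' i : ℕ, ((a i * w i : ℝ≥0) : ℝ≥0∞)) / 8 :=
          ENNReal.div_le_div_right hAbound 8
        _ ≤ _ := ENNReal.div_le_div_left hBbound _
    have hfinal := le_trans hq hle
    have : (M : ℝ≥0∞) + 1 < (M : ℝ≥0∞) + 1 :=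
      lt_of_le_of_lt hfinal (lt_trans hM (ENNReal.lt_add_right (ENNReal.natCast_ne_top M)
        one_ne_zero))
    exact lt_irrefl _ this
  · rintro (hsum | hinf)
    · apply ne_top_of_le_ne_top
        (ENNReal.div_lt_top hsum (ENNReal.coe_ne_zero.mpr hw1.ne')).ne
      apply iSup_le
      rintro ⟨a, ha, hane⟩
      simp only
      have ha0 : (0 : ℝ≥0) < a 0 := by
        by_contra h0
        push_neg at h0
        have h00 : a 0 = 0 := le_antisymm h0 zero_le
        exact hane (funext fun i =>
          le_antisymm (le_trans (ha (Nat.zero_le i)) h00.le) zero_le)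
      have hA : ∑' i : ℕ, ((a i * w i : ℝ≥0) : ℝ≥0∞)
          ≤ (a 0 : ℝ≥0∞) * ∑' i : ℕ, (w i : ℝ≥0∞) := by
        rw [← ENNReal.tsum_mul_left]
        apply ENNReal.tsum_le_tsum
        intro i
        push_cast
        exact mul_le_mul_left (ENNReal.coe_le_coe.mpr (ha (Nat.zero_le i))) _
      have hB : ((a 0 : ℝ≥0∞) * (w 0 : ℝ≥0∞))
          ≤ ⨆ n : ℕ, ∑ i ∈ Finset.range n, ((a i * w (n - 1 - i) : ℝ≥0) : ℝ≥0∞) := by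
        have h1 := le_iSup
          (fun n : ℕ => ∑ i ∈ Finset.range n, ((a i * w (n - 1 - i) : ℝ≥0) : ℝ≥0∞)) 1
        simpa using h1
      calc _ ≤ ((a 0 : ℝ≥0∞) * ∑' i : ℕ, (w i : ℝ≥0∞)) /
            ((a 0 : ℝ≥0∞) * (w 0 : ℝ≥0∞)) := ENNReal.div_le_div hA hB
        _ = (∑' i : ℕ, (w i : ℝ≥0∞)) / (w 0 : ℝ≥0∞) :=
          ENNReal.mul_div_mul_left _ _ (ENNReal.coe_ne_zero.mpr ha0.ne') ENNReal.coe_ne_top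
    · set c := ⨅ i, w i with hc
      have hcne : (c : ℝ≥0∞) ≠ 0 := ENNReal.coe_ne_zero.mpr hinf.ne'
      apply ne_top_of_le_ne_top (ENNReal.div_lt_top ENNReal.coe_ne_top hcne).ne
      apply iSup_le
      rintro ⟨a, ha, hane⟩
      simp only
      by_cases hB : (⨆ n : ℕ, ∑ i ∈ Finset.range n, ((a i * w (n - 1 - i) : ℝ≥0) : ℝ≥0∞)) = ⊤
      · rw [hB, ENNReal.div_top]
        exact zero_le
      · apply ENNReal.div_le_of_le_mul
        have h1 : ∀ n : ℕ, (c : ℝ≥0∞) * ∑ i ∈ Finset.range n, (a i : ℝ≥0∞)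
            ≤ ⨆ n : ℕ, ∑ i ∈ Finset.range n, ((a i * w (n - 1 - i) : ℝ≥0) : ℝ≥0∞) := by
          intro n
          rw [Finset.mul_sum]
          refine le_trans (Finset.sum_le_sum ?_)
            (le_iSup (fun n : ℕ => ∑ i ∈ Finset.range n,
              ((a i * w (n - 1 - i) : ℝ≥0) : ℝ≥0∞)) n)
          intro i _
          push_cast
          rw [mul_comm]
          apply mul_le_mul_right
          exact ENNReal.coe_le_coe.mpr (ciInf_le (OrderBot.bddBelow _) (n - 1 - i))
        have h2 : (c : ℝ≥0∞) * ∑' i : ℕ, (a i : ℝ≥0∞)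
            ≤ ⨆ n : ℕ, ∑ i ∈ Finset.range n, ((a i * w (n - 1 - i) : ℝ≥0) : ℝ≥0∞) := by
          rw [ENNReal.tsum_eq_iSup_nat, ENNReal.mul_iSup]
          exact iSup_le h1
        have h3 : ∑' i : ℕ, ((a i * w i : ℝ≥0) : ℝ≥0∞)
            ≤ (w 0 : ℝ≥0∞) * ∑' i : ℕ, (a i : ℝ≥0∞) := by
          rw [← ENNReal.tsum_mul_left]
          apply ENNReal.tsum_le_tsum
          intro i
          push_cast
          rw [mul_comm ((w 0 : ℝ≥0) : ℝ≥0∞)]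
          exact mul_le_mul_right (ENNReal.coe_le_coe.mpr (hw (Nat.zero_le i))) _
        have h4 : ∑' i : ℕ, (a i : ℝ≥0∞)
            ≤ (⨆ n : ℕ, ∑ i ∈ Finset.range n, ((a i * w (n - 1 - i) : ℝ≥0) : ℝ≥0∞))
              / (c : ℝ≥0∞) := by
          rw [ENNReal.le_div_iff_mul_le (Or.inl hcne) (Or.inl ENNReal.coe_ne_top)]
          rw [mul_comm]
          exact h2
        calc ∑' i : ℕ, ((a i * w i : ℝ≥0) : ℝ≥0∞)
            ≤ (w 0 : ℝ≥0∞) * ∑' i : ℕ, (a i : ℝ≥0∞) := h3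
          _ ≤ (w 0 : ℝ≥0∞) *
              ((⨆ n : ℕ, ∑ i ∈ Finset.range n, ((a i * w (n - 1 - i) : ℝ≥0) : ℝ≥0∞))
                / (c : ℝ≥0∞)) := mul_le_mul_right h4 _
          _ = ((w 0 : ℝ≥0∞) / (c : ℝ≥0∞)) *
              (⨆ n : ℕ, ∑ i ∈ Finset.range n, ((a i * w (n - 1 - i) : ℝ≥0) : ℝ≥0∞)) := by
            rw [div_eq_mul_inv, div_eq_mul_inv]
            ring
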